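/- Let N ≥ 1 and let α, β be real numbers such that α², β², αβ are linearly independent over ℚ (equivalently, mα² + nβ² + pαβ = 0 with m, n, p ∈ ℤ forces m = n = p = 0). Let x, x' ∈ {α, β}^N with S_α(x) = {i : x[i] = α}, S_β(x) = {j : x[j] = β}, and similarly for x'. If a_x = a_{x'}, then the ordered partitions (S_α(x), S_β(x)) and (S_α(x'), S_β(x')) of [0,N-1] are homometric. -/

import Mathlib

/-- The cyclic distance `d(i,j) = min(|i-j|, N-|i-j|)` on `ZMod N`. -/
def cdist {N : ℕ} (i j : ZMod N) : ℕ := min (i - j).val (j - i).val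

/-- The cyclic difference multiset `A - B = {d(i,j) : i ∈ A, j ∈ B}`. -/
def diffMS {N : ℕ} (A B : Finset (ZMod N)) : Multiset ℕ :=
  (A ×ˢ B).val.map fun p => cdist p.1 p.2

/-- The self difference multiset `A - A = {d(i,j) : i ≤ j ∈ A}`. -/
def selfDiffMS {N : ℕ} (A : Finset (ZMod N)) : Multiset ℕ :=
  ((A ×ˢ A).filter fun p => p.1.val ≤ p.2.val).val.map fun p => cdist p.1 p.2

/-- Two subsets are homometric if they have the same self difference multiset. -/
def Homometric {N : ℕ} (A B : Finset (ZMod N)) : Prop :=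
  selfDiffMS A = selfDiffMS B

/-- `σ : ZMod N → ZMod N` is given by the action of an element of the dihedral
group `D_{2N}`, generated by the rotation `i ↦ i + 1` and the reflection `i ↦ -i`. -/
def IsDihedral {N : ℕ} (σ : ZMod N → ZMod N) : Prop :=
  (∃ k : ZMod N, ∀ i, σ i = i + k) ∨ (∃ k : ZMod N, ∀ i, σ i = -i + k)

/-- Two subsets are equivalent if one is the image of the other under `D_{2N}`. -/
def EquivSets {N : ℕ} (A B : Finset (ZMod N)) : Prop :=
  ∃ σ : ZMod N → ZMod N, IsDihedral σ ∧ B = A.image σ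

/-- An ordered partition of `[0, N-1]`: pairwise disjoint sets covering everything. -/
def IsPartitionOf {N K : ℕ} [NeZero N] (A : Fin K → Finset (ZMod N)) : Prop :=
  (∀ i j, i ≠ j → Disjoint (A i) (A j)) ∧ Finset.univ.biUnion A = Finset.univ

/-- Two ordered partitions are homometric if `A i - A j = B i - B j` for all pairs. -/
def HomometricPart {N K : ℕ} (A B : Fin K → Finset (ZMod N)) : Prop :=
  ∀ i j, diffMS (A i) (A j) = diffMS (B i) (B j)

/-- Two ordered partitions are equivalent if a single dihedral element maps one to the other. -/
def EquivPart {N K : ℕ} (A B : Fin K → Finset (ZMod N)) : Prop :=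
  ∃ σ : ZMod N → ZMod N, IsDihedral σ ∧ ∀ i, B i = (A i).image σ

/-- Two ordered partitions are pseudo-equivalent if each part is mapped by some
(possibly different) dihedral element. -/
def PseudoEquivPart {N K : ℕ} (A B : Fin K → Finset (ZMod N)) : Prop :=
  ∀ i, ∃ σ : ZMod N → ZMod N, IsDihedral σ ∧ B i = (A i).image σ

/-- The periodic autocorrelation `a_x[ℓ] = ∑ x[n] x[n+ℓ]`. -/
noncomputable def autocorr {N : ℕ} [NeZero N] (x : ZMod N → ℝ) (ℓ : ZMod N) : ℝ :=
  ∑ n : ZMod N, x n * x (n + ℓ)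

open Classical in
/-- The level set `{i : x[i] = a}` of a signal. -/
noncomputable def levelSet {N : ℕ} [NeZero N] (x : ZMod N → ℝ) (a : ℝ) : Finset (ZMod N) :=
  Finset.univ.filter fun i => x i = a

open Classical in
/-- Count of positions `n` with `x n = a` and `x (n+ℓ) = b`. -/
noncomputable def cnt {N : ℕ} [NeZero N] (x : ZMod N → ℝ) (a b : ℝ) (ℓ : ZMod N) : ℕ :=
  (Finset.univ.filter fun n => x n = a ∧ x (n + ℓ) = b).card

lemma autocorr_expand {N : ℕ} [NeZero N] (α β : ℝ) (hne : α ≠ β)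
    (x : ZMod N → ℝ) (hx : ∀ n, x n = α ∨ x n = β) (ℓ : ZMod N) :
    autocorr x ℓ = (cnt x α α ℓ) * α^2 + (cnt x β β ℓ) * β^2
      + ((cnt x α β ℓ : ℝ) + (cnt x β α ℓ)) * (α*β) := by
  classical
  have key : ∀ n : ZMod N, x n * x (n+ℓ)
      = (if x n = α ∧ x (n+ℓ) = α then α^2 else 0)
      + (if x n = β ∧ x (n+ℓ) = β then β^2 else 0)
      + (if x n = α ∧ x (n+ℓ) = β then α*β else 0)
      + (if x n = β ∧ x (n+ℓ) = α then α*β else 0) := by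
    intro n
    rcases hx n with h1 | h1 <;> rcases hx (n+ℓ) with h2 | h2 <;>
      simp [h1, h2, hne, Ne.symm hne] <;> ring
  unfold autocorr
  simp_rw [key, Finset.sum_add_distrib, ← Finset.sum_filter, Finset.sum_const,
    nsmul_eq_mul]
  simp only [cnt]
  ring

lemma cnt_swap {N : ℕ} [NeZero N] (x : ZMod N → ℝ) (a b : ℝ) (ℓ : ZMod N) :
    cnt x b a ℓ = cnt x a b (-ℓ) := by
  classical
  unfold cnt
  apply Finset.card_nbij' (fun n => n + ℓ) (fun n => n - ℓ)
  · intro n hn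
    simp only [Finset.mem_coe, Finset.mem_filter, Finset.mem_univ, true_and] at hn ⊢
    exact ⟨hn.2, by rw [add_neg_cancel_right]; exact hn.1⟩
  · intro n hn
    simp only [Finset.mem_coe, Finset.mem_filter, Finset.mem_univ, true_and] at hn ⊢
    refine ⟨by rw [sub_eq_add_neg]; exact hn.2, by rw [sub_add_cancel]; exact hn.1⟩
  · intro n _; simp
  · intro n _; simp

lemma count_diffMS {N : ℕ} [NeZero N] (x : ZMod N → ℝ) (a b : ℝ) (d : ℕ) :
    Multiset.count d (diffMS (levelSet x a) (levelSet x b)) =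
      ∑ ℓ ∈ Finset.univ.filter (fun ℓ : ZMod N => min ℓ.val (-ℓ).val = d),
        cnt x a b ℓ := by
  classical
  rw [diffMS, Multiset.count_map]
  have hcard : Multiset.card
      (Multiset.filter (fun p => d = cdist p.1 p.2) (levelSet x a ×ˢ levelSet x b).val)
      = ((levelSet x a ×ˢ levelSet x b).filter fun p => d = cdist p.1 p.2).card := rfl
  rw [hcard]
  have hmaps : ∀ p ∈ (levelSet x a ×ˢ levelSet x b).filter fun p => d = cdist p.1 p.2,
      p.2 - p.1 ∈ Finset.univ.filter fun ℓ : ZMod N => min ℓ.val (-ℓ).val = d := by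
    intro p hp
    simp only [Finset.mem_filter, Finset.mem_univ, true_and] at hp ⊢
    rw [hp.2, cdist, show p.1 - p.2 = -(p.2 - p.1) by ring]
    exact (min_comm _ _)
  rw [Finset.card_eq_sum_card_fiberwise hmaps]
  refine Finset.sum_congr rfl ?_
  intro ℓ hℓ
  simp only [Finset.mem_filter, Finset.mem_univ, true_and] at hℓ
  apply Finset.card_nbij' (fun p => p.1) (fun n => (n, n + ℓ))
  · intro p hp
    simp only [Finset.mem_coe, Finset.mem_filter, Finset.mem_univ, true_and, Finset.mem_product,
      levelSet, cnt] at hp ⊢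
    have h2 : p.2 = p.1 + ℓ := by
      have := hp.2; rw [sub_eq_iff_eq_add] at this; rw [this]; ring
    exact ⟨hp.1.1.1, h2 ▸ hp.1.1.2⟩
  · intro n hn
    simp only [Finset.mem_coe, Finset.mem_filter, Finset.mem_univ, true_and, Finset.mem_product,
      levelSet, cnt] at hn ⊢
    refine ⟨⟨⟨hn.1, hn.2⟩, ?_⟩, by ring⟩
    rw [cdist, show n - (n + ℓ) = -ℓ by ring, show n + ℓ - n = ℓ by ring,
      min_comm, hℓ]
  · intro p hp
    simp only [Finset.mem_coe, Finset.mem_filter, Finset.mem_univ, true_and] at hp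
    have h2 : p.2 = p.1 + ℓ := by
      have := hp.2; rw [sub_eq_iff_eq_add] at this; rw [this]; ring
    exact Prod.ext rfl h2.symm
  · intro n _; rfl

lemma sum_cnt_swap {N : ℕ} [NeZero N] (x : ZMod N → ℝ) (a b : ℝ) (d : ℕ) :
    ∑ ℓ ∈ Finset.univ.filter (fun ℓ : ZMod N => min ℓ.val (-ℓ).val = d), cnt x b a ℓ
      = ∑ ℓ ∈ Finset.univ.filter (fun ℓ : ZMod N => min ℓ.val (-ℓ).val = d),
          cnt x a b ℓ := by
  classical
  rw [Finset.sum_congr rfl (fun ℓ _ => cnt_swap x a b ℓ)]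
  apply Finset.sum_nbij' (fun ℓ => -ℓ) (fun ℓ => -ℓ)
  · intro ℓ hℓ
    simp only [Finset.mem_filter, Finset.mem_univ, true_and] at hℓ ⊢
    rw [neg_neg, min_comm]; exact hℓ
  · intro ℓ hℓ
    simp only [Finset.mem_filter, Finset.mem_univ, true_and] at hℓ ⊢
    rw [neg_neg, min_comm]; exact hℓ
  · intro ℓ _; simp
  · intro ℓ _; simp
  · intro ℓ _; rfl

/-- for generic `α, β`, equal autocorrelations imply homometric
level-set partitions. -/
theorem autocorr_implies_homometric_partition (N : ℕ) [NeZero N] (α β : ℝ)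
    (hgen : ∀ m n p : ℤ,
      (m : ℝ) * α ^ 2 + (n : ℝ) * β ^ 2 + (p : ℝ) * (α * β) = 0 → m = 0 ∧ n = 0 ∧ p = 0)
    (x x' : ZMod N → ℝ)
    (hx : ∀ n, x n = α ∨ x n = β) (hx' : ∀ n, x' n = α ∨ x' n = β)
    (h : autocorr x = autocorr x') :
    HomometricPart ![levelSet x α, levelSet x β] ![levelSet x' α, levelSet x' β] := by
  classical
  have hne : α ≠ β := by
    intro hab
    have := (hgen 1 0 (-1) (by push_cast; rw [hab]; ring)).1
    norm_num at this
  have key : ∀ ℓ : ZMod N, cnt x α α ℓ = cnt x' α α ℓ ∧ cnt x β β ℓ = cnt x' β β ℓ ∧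
      cnt x α β ℓ + cnt x β α ℓ = cnt x' α β ℓ + cnt x' β α ℓ := by
    intro ℓ
    have h1 := congrFun h ℓ
    rw [autocorr_expand α β hne x hx ℓ, autocorr_expand α β hne x' hx' ℓ] at h1
    obtain ⟨e1, e2, e3⟩ := hgen ((cnt x α α ℓ : ℤ) - cnt x' α α ℓ)
      ((cnt x β β ℓ : ℤ) - cnt x' β β ℓ)
      (((cnt x α β ℓ : ℤ) + cnt x β α ℓ) - ((cnt x' α β ℓ : ℤ) + cnt x' β α ℓ))
      (by push_cast; ring_nf; ring_nf at h1; linarith)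
    refine ⟨?_, ?_, ?_⟩ <;> omega
  have main : ∀ a b : ℝ,
      (∀ d : ℕ, ∑ ℓ ∈ Finset.univ.filter (fun ℓ : ZMod N => min ℓ.val (-ℓ).val = d),
          cnt x a b ℓ
        = ∑ ℓ ∈ Finset.univ.filter (fun ℓ : ZMod N => min ℓ.val (-ℓ).val = d),
          cnt x' a b ℓ) →
      diffMS (levelSet x a) (levelSet x b) = diffMS (levelSet x' a) (levelSet x' b) := by
    intro a b hc
    refine Multiset.ext.mpr fun d => ?_
    rw [count_diffMS, count_diffMS]
    exact hc d
  have hαβ : ∀ d : ℕ, ∑ ℓ ∈ Finset.univ.filter (fun ℓ : ZMod N => min ℓ.val (-ℓ).val = d),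
      cnt x α β ℓ
    = ∑ ℓ ∈ Finset.univ.filter (fun ℓ : ZMod N => min ℓ.val (-ℓ).val = d),
      cnt x' α β ℓ := by
    intro d
    have hsum : ∑ ℓ ∈ Finset.univ.filter (fun ℓ : ZMod N => min ℓ.val (-ℓ).val = d),
        (cnt x α β ℓ + cnt x β α ℓ)
      = ∑ ℓ ∈ Finset.univ.filter (fun ℓ : ZMod N => min ℓ.val (-ℓ).val = d),
        (cnt x' α β ℓ + cnt x' β α ℓ) :=
      Finset.sum_congr rfl fun ℓ _ => (key ℓ).2.2
    rw [Finset.sum_add_distrib, Finset.sum_add_distrib, sum_cnt_swap x α β d,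
      sum_cnt_swap x' α β d] at hsum
    omega
  intro i j
  fin_cases i <;> fin_cases j <;>
    simp only [Matrix.cons_val_zero, Matrix.cons_val_one, Matrix.head_cons, Fin.isValue]
  · exact main α α fun d => Finset.sum_congr rfl fun ℓ _ => (key ℓ).1
  · exact main α β hαβ
  · exact main β α fun d => by
      rw [sum_cnt_swap x α β d, sum_cnt_swap x' α β d]; exact hαβ d
  · exact main β β fun d => Finset.sum_congr rfl fun ℓ _ => (key ℓ).2.1
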